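/- Let k ≥ 2, σ ∈ {+,−}^k and n ≥ 1. If π ∈ S_n satisfies π_n = n, ĥπ* ∈ C^{σ,*}, and condition (†), then π ∈ A_n(Σ_σ). -/
import Mathlib


/-- Infinite words over the alphabet `{0,…,k-1}`; `s i` is the letter `s_{i+1}`. -/
abbrev Word (k : ℕ) := ℕ → Fin k

/-- The number of indices `i < j` (0-indexed) with `σ_{s_i} = −` (`false` encodes `−`). -/
def negCount {k : ℕ} (σ : Fin k → Bool) (s : Word k) (j : ℕ) : ℕ :=
  ((Finset.range j).filter (fun i => σ (s i) = false)).card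

/-- The strict order `s ≺_σ t` on infinite words. -/
def sLt {k : ℕ} (σ : Fin k → Bool) (s t : Word k) : Prop :=
  ∃ j : ℕ, (∀ i < j, s i = t i) ∧ s j ≠ t j ∧
    ((Even (negCount σ s j) ∧ s j < t j) ∨ (¬ Even (negCount σ s j) ∧ t j < s j))

/-- `shiftW s i` is the word `s_{[i+1,∞)}`, i.e. the `i`-th iterate of the shift. -/
def shiftW {k : ℕ} (s : Word k) (i : ℕ) : Word k := fun m => s (m + i)

/-- `Pat(s, Σ_σ, n) = π`: the first `n` shifts of `s` are ordered according to `π`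
(0-indexed one-line notation). -/
def PatIs {k n : ℕ} (σ : Fin k → Bool) (s : Word k) (π : Equiv.Perm (Fin n)) : Prop :=
  ∀ i j : Fin n, π i < π j ↔ sLt σ (shiftW s i) (shiftW s j)

/-- The allowed patterns of length `n` of the signed shift `Σ_σ`. -/
def Allowed {k : ℕ} (σ : Fin k → Bool) (n : ℕ) : Set (Equiv.Perm (Fin n)) :=
  {π | ∃ s : Word k, PatIs σ s π}

/-- The starred cycle `ĥπ*` of `π`, as a partial map on 0-indexed positions:
position `π_i` carries value `π_{i+1}`, and position `π_n` carries `*` (i.e. `none`). -/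
def hatStar {n : ℕ} (π : Equiv.Perm (Fin n)) (p : Fin n) : Option (Fin n) :=
  if h : (π.symm p : ℕ) = n - 1 then none
  else some (π ⟨(π.symm p : ℕ) + 1, by have := (π.symm p).isLt; omega⟩)

/-- `e : ℕ → ℕ` (used on `{0,…,k}`) is a `*`-`σ`-segmentation of `ĥπ*`. -/
def IsStarSeg {k n : ℕ} (σ : Fin k → Bool) (π : Equiv.Perm (Fin n)) (e : ℕ → ℕ) : Prop :=
  e 0 = 0 ∧ e k = n ∧ Monotone e ∧
  -- (a) the non-`*` entries in the `t`-th block are increasing (σ_t = +) or decreasing (σ_t = −)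
  (∀ t : Fin k, ∀ p q : Fin n, e t ≤ (p : ℕ) → (q : ℕ) < e ((t : ℕ) + 1) → (p : ℕ) < (q : ℕ) →
    ∀ v w : Fin n, hatStar π p = some v → hatStar π q = some w →
      (if σ t = true then v < w else w < v)) ∧
  -- (b)
  (∀ (hk : 0 < k) (h0 : 0 < n) (h1 : 1 < n), σ ⟨0, hk⟩ = true →
     hatStar π ⟨0, h0⟩ = none → hatStar π ⟨1, h1⟩ = some ⟨0, h0⟩ → e 1 ≤ 1) ∧
  -- (c)
  (∀ (hk : k - 1 < k) (h0 : n - 2 < n) (h1 : n - 1 < n), σ ⟨k - 1, hk⟩ = true →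
     hatStar π ⟨n - 2, h0⟩ = some ⟨n - 1, h1⟩ → hatStar π ⟨n - 1, h1⟩ = none →
     n - 1 ≤ e (k - 1)) ∧
  -- (d)
  (∀ (hk0 : 0 < k) (hk1 : k - 1 < k) (h0 : 0 < n) (h1 : n - 2 < n) (h2 : n - 1 < n),
     σ ⟨0, hk0⟩ = false → σ ⟨k - 1, hk1⟩ = false →
     hatStar π ⟨0, h0⟩ = some ⟨n - 1, h2⟩ →
     hatStar π ⟨n - 2, h1⟩ = some ⟨0, h0⟩ → hatStar π ⟨n - 1, h2⟩ = none →
     e 1 = 0 ∨ n - 1 ≤ e (k - 1)) ∧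
  -- (e)
  (∀ (hk0 : 0 < k) (hk1 : k - 1 < k) (h0 : 0 < n) (h1 : 1 < n) (h2 : n - 1 < n),
     σ ⟨0, hk0⟩ = false → σ ⟨k - 1, hk1⟩ = false →
     hatStar π ⟨n - 1, h2⟩ = some ⟨0, h0⟩ →
     hatStar π ⟨0, h0⟩ = none → hatStar π ⟨1, h1⟩ = some ⟨n - 1, h2⟩ →
     e (k - 1) = n ∨ e 1 ≤ 1)

/-- `ĥπ* ∈ C^{σ,*}`: some `*`-`σ`-segmentation exists. -/
def InCstar {k n : ℕ} (σ : Fin k → Bool) (π : Equiv.Perm (Fin n)) : Prop :=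
  ∃ e : ℕ → ℕ, IsStarSeg σ π e

/-- The bad configuration forbidden by condition `(†)`: an integer `b ≥ 1` with `n − 2b ≥ 1`
such that `π_n` lies strictly between `π_{n−2b}` and `π_{n−b}`, and for all `1 ≤ i ≤ b` and
`0 ≤ t ≤ k−1`, `e_t < π_{n−b−i} ≤ e_{t+1}` iff `e_t < π_{n−i} ≤ e_{t+1}`.
(Values of `π` are 0-indexed, so `e_t < v ≤ e_{t+1}` becomes `e t ≤ v ∧ v < e (t+1)`.) -/
def DaggerBad (k : ℕ) {n : ℕ} (π : Equiv.Perm (Fin n)) (e : ℕ → ℕ) (b : ℕ) : Prop :=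
  ∃ (_ : 1 ≤ b) (hbn : 2 * b < n),
    (((π ⟨n - 1 - 2 * b, by omega⟩ : ℕ) < (π ⟨n - 1, by omega⟩ : ℕ) ∧
      (π ⟨n - 1, by omega⟩ : ℕ) < (π ⟨n - 1 - b, by omega⟩ : ℕ)) ∨
     ((π ⟨n - 1 - b, by omega⟩ : ℕ) < (π ⟨n - 1, by omega⟩ : ℕ) ∧
      (π ⟨n - 1, by omega⟩ : ℕ) < (π ⟨n - 1 - 2 * b, by omega⟩ : ℕ))) ∧
    (∀ i, 1 ≤ i → i ≤ b → ∀ t, t < k →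
      ((e t ≤ (π ⟨n - 1 - b - i, by omega⟩ : ℕ) ∧ (π ⟨n - 1 - b - i, by omega⟩ : ℕ) < e (t + 1)) ↔
       (e t ≤ (π ⟨n - 1 - i, by omega⟩ : ℕ) ∧ (π ⟨n - 1 - i, by omega⟩ : ℕ) < e (t + 1))))

/-- Condition `(†)`. -/
def Dagger {k n : ℕ} (σ : Fin k → Bool) (π : Equiv.Perm (Fin n)) : Prop :=
  ∃ e : ℕ → ℕ, IsStarSeg σ π e ∧ ∀ b : ℕ, ¬ DaggerBad k π e b

/-- The letter of the `π`-monotone word assigned to the (0-indexed) value `v`: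
the unique `t` with `e t ≤ v < e (t+1)` when `e` is a segmentation. -/
noncomputable def segLetter {k : ℕ} (hk : 0 < k) (e : ℕ → ℕ) (v : ℕ) : Fin k :=
  ⟨min (k - 1) (sInf {t : ℕ | v < e (t + 1)}),
   by have := Nat.min_le_left (k - 1) (sInf {t : ℕ | v < e (t + 1)}); omega⟩

/-- The `π`-monotone word `s_1 ⋯ s_n` associated to a segmentation `e`. -/
noncomputable def monoWord {k n : ℕ} (hk : 0 < k) (e : ℕ → ℕ) (π : Equiv.Perm (Fin n)) : List (Fin k) :=
  (List.finRange n).map (fun i => segLetter hk e (π i))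

/-- Prepend a finite word to an infinite word. -/
def appendW {k : ℕ} (l : List (Fin k)) (s : Word k) : Word k :=
  fun i => if h : i < l.length then l.get ⟨i, h⟩ else s (i - l.length)

/-- `n(q)`: number of negative letters of a finite word `q`. -/
def negCountL {k : ℕ} (σ : Fin k → Bool) (q : List (Fin k)) : ℕ :=
  (q.filter (fun c => σ c = false)).length

/-- The least word `w_σ` of `(W_k, ≺_σ)`. -/
def wMin {k : ℕ} (hk : 0 < k) (σ : Fin k → Bool) : Word k :=
  if σ ⟨0, hk⟩ = true then fun _ => ⟨0, hk⟩
  else if σ ⟨k - 1, by omega⟩ = true then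
    fun i => if i = 0 then ⟨0, hk⟩ else ⟨k - 1, by omega⟩
  else fun i => if i % 2 = 0 then ⟨0, hk⟩ else ⟨k - 1, by omega⟩

/-- The greatest word `W_σ` of `(W_k, ≺_σ)`. -/
def wMax {k : ℕ} (hk : 0 < k) (σ : Fin k → Bool) : Word k :=
  if σ ⟨k - 1, by omega⟩ = true then fun _ => ⟨k - 1, by omega⟩
  else if σ ⟨0, hk⟩ = true then
    fun i => if i = 0 then ⟨k - 1, by omega⟩ else ⟨0, hk⟩
  else fun i => if i % 2 = 0 then ⟨k - 1, by omega⟩ else ⟨0, hk⟩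

/-- A finite word is primitive if it is not a proper power of a shorter word. -/
def PrimitiveW {k : ℕ} (q : List (Fin k)) : Prop :=
  ¬ ∃ (r : List (Fin k)) (m : ℕ), r.length < q.length ∧ 1 < m ∧
      q = (List.replicate m r).flatten

/-- The word `s^{(1)}` (with `useMin = true`) resp. `s^{(2)}` (with `useMin = false`)
built from the `π`-monotone word of a segmentation `e` and a 0-indexed position `x0`:
`u p^{n−1}` followed by `w_σ`/`W_σ` according to the parities of `n` and `n(p)`. -/
noncomputable def buildWord {k n : ℕ} (hk : 0 < k) (σ : Fin k → Bool) (e : ℕ → ℕ)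
    (π : Equiv.Perm (Fin n)) (x0 : ℕ) (useMin : Bool) : Word k :=
  let w := monoWord hk e π
  let p := (w.take (n - 1)).drop x0
  let tail :=
    if n % 2 = 0 ∨ negCountL σ p % 2 = 0 then
      (if useMin then wMin hk σ else wMax hk σ)
    else
      (if useMin then wMax hk σ else wMin hk σ)
  appendW (w.take x0 ++ (List.replicate (n - 1) p).flatten) tail

/-- `ψ_k(t)`: the number of primitive words of length `t` over a `k`-letter alphabet. -/
noncomputable def psiW (k t : ℕ) : ℕ :=
  Set.ncard {q : List (Fin k) | q.length = t ∧ PrimitiveW q}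

/-- `a(n,k) = Σ_{t=1}^{n−1} ψ_k(t)·k^{n−t−1}`. -/
noncomputable def aNum (n k : ℕ) : ℕ :=
  ∑ t ∈ Finset.Icc 1 (n - 1), psiW k t * k ^ (n - t - 1)

/-- `I_{n,k} = a(n,k) + (k−2)k^{n−2}`, the number of allowed intervals of the `k`-shift. -/
noncomputable def INum (n k : ℕ) : ℕ := aNum n k + (k - 2) * k ^ (n - 2)

/-- The all-`+` signature, giving the `k`-shift. -/
def allPlus (k : ℕ) : Fin k → Bool := fun _ => true

/-- `b(n,2) = |A_n(Σ_2)|` and `b(n,i) = |A_n(Σ_i) \ A_n(Σ_{i−1})|` for `i ≥ 3`. -/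
noncomputable def bNum (n i : ℕ) : ℕ :=
  if i ≤ 2 then (Allowed (allPlus 2) n).ncard
  else ((Allowed (allPlus i) n) \ (Allowed (allPlus (i - 1)) n)).ncard


section AuxProof

open Finset

variable {k : ℕ}

private lemma negCount_congr' (σ : Fin k → Bool) {s t : Word k} {j : ℕ}
    (h : ∀ i < j, s i = t i) : negCount σ s j = negCount σ t j := by
  unfold negCount
  congr 1
  apply Finset.filter_congr
  intro i hi
  rw [h i (Finset.mem_range.mp hi)]

private lemma sLt_irrefl' (σ : Fin k → Bool) (s : Word k) : ¬ sLt σ s s := by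
  rintro ⟨j, -, hne, -⟩; exact hne rfl

private lemma sLt_asymm' (σ : Fin k → Bool) {s t : Word k} (h1 : sLt σ s t) : ¬ sLt σ t s := by
  rintro ⟨j', ha', hne', hc'⟩
  obtain ⟨j, ha, hne, hc⟩ := h1
  have hjj : j = j' := by
    by_contra hne2
    rcases Nat.lt_or_ge j j' with h | h
    · exact hne (ha' j h).symm
    · rcases Nat.lt_or_ge j' j with h2 | h2
      · exact hne' (ha j' h2).symm
      · omega
  subst hjj
  have hcnt : negCount σ t j = negCount σ s j := negCount_congr' σ ha'
  rw [hcnt] at hc'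
  rcases hc with ⟨he, hlt⟩ | ⟨he, hlt⟩ <;> rcases hc' with ⟨he', hlt'⟩ | ⟨he', hlt'⟩
  · exact lt_asymm hlt hlt'
  · exact he' he
  · exact he he'
  · exact lt_asymm hlt hlt'

private lemma negCount_succ_top (σ : Fin k → Bool) (s : Word k) (j : ℕ) :
    negCount σ s (j+1) = negCount σ s j + (if σ (s j) = false then 1 else 0) := by
  unfold negCount
  rw [Finset.range_add_one, Finset.filter_insert]
  split
  · rw [Finset.card_insert_of_notMem (by simp)]
  · simp

private lemma negCount_succ_front (σ : Fin k → Bool) (s : Word k) (j : ℕ) :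
    negCount σ s (j+1) =
      (if σ (s 0) = false then 1 else 0) + negCount σ (fun m => s (m+1)) j := by
  induction j with
  | zero =>
      unfold negCount
      rw [Finset.range_one, Finset.filter_singleton, Finset.range_zero, Finset.filter_empty,
        Finset.card_empty]
      by_cases h : σ (s 0) = false <;> simp [h]
  | succ j ih =>
      rw [negCount_succ_top σ s (j+1), ih, negCount_succ_top σ (fun m => s (m+1)) j]
      omega

private lemma sLt_cons_pos (σ : Fin k → Bool) {s t : Word k} (h0 : s 0 = t 0)
    (hσ : σ (s 0) = true)
    (h : sLt σ (fun m => s (m+1)) (fun m => t (m+1))) : sLt σ s t := by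
  obtain ⟨j, ha, hne, hc⟩ := h
  have hcnt : negCount σ s (j+1) = negCount σ (fun m => s (m+1)) j := by
    rw [negCount_succ_front σ s j, hσ]; simp
  refine ⟨j+1, ?_, hne, ?_⟩
  · intro i hi
    cases i with
    | zero => exact h0
    | succ i => exact ha i (by omega)
  · rw [hcnt]
    exact hc

private lemma sLt_cons_neg (σ : Fin k → Bool) {s t : Word k} (h0 : s 0 = t 0)
    (hσ : σ (s 0) = false)
    (h : sLt σ (fun m => t (m+1)) (fun m => s (m+1))) : sLt σ s t := by
  obtain ⟨j, ha, hne, hc⟩ := h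
  have hcnt2 : negCount σ (fun m => t (m+1)) j = negCount σ (fun m => s (m+1)) j :=
    negCount_congr' σ ha
  have hcnt : negCount σ s (j+1) = negCount σ (fun m => t (m+1)) j + 1 := by
    rw [negCount_succ_front σ s j, hσ, hcnt2]; simp; omega
  refine ⟨j+1, ?_, fun hh => hne hh.symm, ?_⟩
  · intro i hi
    cases i with
    | zero => exact h0
    | succ i => exact (ha i (by omega)).symm
  · rw [hcnt]
    rcases hc with ⟨he, hlt⟩ | ⟨he, hlt⟩
    · exact Or.inr ⟨by simp [Nat.even_add_one, he], hlt⟩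
    · exact Or.inl ⟨by simp [Nat.even_add_one, he], hlt⟩

private lemma wMax_greatest (hk0 : 0 < k) (hk2 : 2 ≤ k) (σ : Fin k → Bool) (x : Word k)
    (hx : x ≠ wMax hk0 σ) : sLt σ x (wMax hk0 σ) := by
  classical
  have hex : ∃ j, x j ≠ wMax hk0 σ j := by
    by_contra h; push_neg at h; exact hx (funext h)
  set j := Nat.find hex with hjdef
  have hj : x j ≠ wMax hk0 σ j := Nat.find_spec hex
  have hmin : ∀ i < j, x i = wMax hk0 σ i := by
    intro i hi
    have := Nat.find_min hex hi
    push_neg at this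
    exact this
  refine ⟨j, hmin, hj, ?_⟩
  have hcnt : negCount σ x j = negCount σ (wMax hk0 σ) j := negCount_congr' σ hmin
  rw [hcnt]
  by_cases h1 : σ ⟨k-1, by omega⟩ = true
  · have hw : ∀ i, wMax hk0 σ i = ⟨k-1, by omega⟩ := by
      intro i; simp only [wMax, h1, if_true]
    have hz : negCount σ (wMax hk0 σ) j = 0 := by
      unfold negCount
      rw [Finset.card_eq_zero, Finset.filter_eq_empty_iff]
      intro i _
      rw [hw i, h1]
      simp
    rw [hz]
    refine Or.inl ⟨Even.zero, ?_⟩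
    rw [hw j] at hj ⊢
    have hne : (x j : ℕ) ≠ k - 1 := fun h => hj (Fin.ext h)
    have hxlt := (x j).isLt
    exact Fin.lt_def.mpr (show (x j : ℕ) < k - 1 by omega)
  · have h1' : σ ⟨k-1, by omega⟩ = false := by
      rw [Bool.not_eq_true] at h1; exact h1
    by_cases h2 : σ ⟨0, hk0⟩ = true
    · have hw : ∀ i, wMax hk0 σ i = if i = 0 then ⟨k-1, by omega⟩ else ⟨0, hk0⟩ := by
        intro i; simp only [wMax, h1', h2, if_true]
        simp
      rcases Nat.eq_zero_or_pos j with hj0 | hj1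
      · have hz : negCount σ (wMax hk0 σ) j = 0 := by
          rw [hj0]; simp [negCount]
        rw [hz]
        refine Or.inl ⟨Even.zero, ?_⟩
        have hwj : wMax hk0 σ j = ⟨k-1, by omega⟩ := by rw [hw j, hj0]; simp
        rw [hwj] at hj ⊢
        have hne : (x j : ℕ) ≠ k - 1 := fun h => hj (Fin.ext h)
        have hxlt := (x j).isLt
        exact Fin.lt_def.mpr (show (x j : ℕ) < k - 1 by omega)
      · have hfil : Finset.filter (fun i => σ (wMax hk0 σ i) = false) (Finset.range j) = {0} := by
          ext i
          simp only [Finset.mem_filter, Finset.mem_range, Finset.mem_singleton]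
          constructor
          · rintro ⟨hi, hp⟩
            by_contra hi0
            rw [hw i, if_neg hi0, h2] at hp
            exact absurd hp (by simp)
          · rintro rfl
            refine ⟨hj1, ?_⟩
            rw [hw 0, if_pos rfl]
            exact h1'
        have hone : negCount σ (wMax hk0 σ) j = 1 := by
          unfold negCount; rw [hfil]; rfl
        rw [hone]
        refine Or.inr ⟨by simp, ?_⟩
        have hjne : j ≠ 0 := by omega
        have hwj : wMax hk0 σ j = ⟨0, hk0⟩ := by rw [hw j, if_neg hjne]
        rw [hwj] at hj ⊢
        have hne : (x j : ℕ) ≠ 0 := fun h => hj (Fin.ext h)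
        exact Fin.lt_def.mpr (show (0:ℕ) < (x j : ℕ) by omega)
    · have h2' : σ ⟨0, hk0⟩ = false := by
        rw [Bool.not_eq_true] at h2; exact h2
      have hw : ∀ i, wMax hk0 σ i = if i % 2 = 0 then ⟨k-1, by omega⟩ else ⟨0, hk0⟩ := by
        intro i; simp only [wMax, h1', h2']
        simp
      have hall : ∀ i ∈ Finset.range j, σ (wMax hk0 σ i) = false := by
        intro i _
        rw [hw i]
        split
        · exact h1'
        · exact h2'
      have hcj : negCount σ (wMax hk0 σ) j = j := by
        unfold negCount
        rw [Finset.filter_true_of_mem hall, Finset.card_range]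
      rw [hcj]
      by_cases hje : j % 2 = 0
      · refine Or.inl ⟨Nat.even_iff.mpr hje, ?_⟩
        have hwj : wMax hk0 σ j = ⟨k-1, by omega⟩ := by rw [hw j, if_pos hje]
        rw [hwj] at hj ⊢
        have hne : (x j : ℕ) ≠ k - 1 := fun h => hj (Fin.ext h)
        have hxlt := (x j).isLt
        exact Fin.lt_def.mpr (show (x j : ℕ) < k - 1 by omega)
      · refine Or.inr ⟨by rw [Nat.even_iff]; omega, ?_⟩
        have hwj : wMax hk0 σ j = ⟨0, hk0⟩ := by rw [hw j, if_neg hje]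
        rw [hwj] at hj ⊢
        have hne : (x j : ℕ) ≠ 0 := fun h => hj (Fin.ext h)
        exact Fin.lt_def.mpr (show (0:ℕ) < (x j : ℕ) by omega)

private lemma wMax_case2_eq {k : ℕ} (hk0 : 0 < k) (σ : Fin k → Bool)
    (h1 : σ ⟨k-1, by omega⟩ = false) (h2 : σ ⟨0, hk0⟩ = true) :
    (wMax hk0 σ 0 = ⟨k-1, by omega⟩) ∧ (∀ i, i ≠ 0 → wMax hk0 σ i = ⟨0, hk0⟩) := by
  have hw : ∀ i, wMax hk0 σ i = if i = 0 then ⟨k-1, by omega⟩ else ⟨0, hk0⟩ := by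
    intro i
    simp only [wMax, h1, h2, if_true]
    simp
  constructor
  · rw [hw 0]; simp
  · intro i hi; rw [hw i, if_neg hi]

private lemma wMax_alt_eq {k : ℕ} (hk0 : 0 < k) (σ : Fin k → Bool)
    (h1 : σ ⟨k-1, by omega⟩ = false) (h2 : σ ⟨0, hk0⟩ = false) :
    (∀ i, i % 2 = 0 → wMax hk0 σ i = ⟨k-1, by omega⟩) ∧
    (∀ i, i % 2 = 1 → wMax hk0 σ i = ⟨0, hk0⟩) := by
  have hw : ∀ i, wMax hk0 σ i = if i % 2 = 0 then ⟨k-1, by omega⟩ else ⟨0, hk0⟩ := by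
    intro i
    simp only [wMax, h1, h2]
    simp
  constructor
  · intro i hi; rw [hw i, if_pos hi]
  · intro i hi; rw [hw i, if_neg (by omega)]

private lemma segLetter_spec (hk0 : 0 < k) (e : ℕ → ℕ) (he0 : e 0 = 0) {n : ℕ}
    (hek : e k = n) {v : ℕ} (hv : v < n) :
    e ((segLetter hk0 e v : ℕ)) ≤ v ∧ v < e ((segLetter hk0 e v : ℕ) + 1) := by
  have hmem : (k-1) ∈ {t : ℕ | v < e (t+1)} := by
    simp only [Set.mem_setOf_eq]
    have h : k - 1 + 1 = k := by omega
    rw [h, hek]; exact hv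
  have hinf_mem : sInf {t : ℕ | v < e (t+1)} ∈ {t : ℕ | v < e (t+1)} :=
    Nat.sInf_mem ⟨_, hmem⟩
  have hle : sInf {t : ℕ | v < e (t+1)} ≤ k - 1 := Nat.sInf_le hmem
  have hval : (segLetter hk0 e v : ℕ) = sInf {t : ℕ | v < e (t+1)} := by
    simp only [segLetter]
    omega
  rw [hval]
  refine ⟨?_, hinf_mem⟩
  rcases Nat.eq_zero_or_pos (sInf {t : ℕ | v < e (t+1)}) with h0 | hpos
  · rw [h0, he0]; omega
  · have hnot : sInf {t : ℕ | v < e (t+1)} - 1 ∉ {t : ℕ | v < e (t+1)} :=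
      Nat.notMem_of_lt_sInf (by omega)
    simp only [Set.mem_setOf_eq] at hnot
    have heq : sInf {t : ℕ | v < e (t+1)} - 1 + 1 = sInf {t : ℕ | v < e (t+1)} := by omega
    rw [heq] at hnot
    omega

private lemma segLetter_mono (hk0 : 0 < k) (e : ℕ → ℕ) {n v v' : ℕ}
    (hek : e k = n) (hv' : v' < n) (h : v ≤ v') :
    (segLetter hk0 e v : ℕ) ≤ (segLetter hk0 e v' : ℕ) := by
  have hmem' : (k-1) ∈ {t : ℕ | v' < e (t+1)} := by
    simp only [Set.mem_setOf_eq]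
    have hh : k - 1 + 1 = k := by omega
    rw [hh, hek]; exact hv'
  have h2 : sInf {t : ℕ | v' < e (t+1)} ∈ {t : ℕ | v' < e (t+1)} :=
    Nat.sInf_mem ⟨_, hmem'⟩
  have h3 : sInf {t : ℕ | v' < e (t+1)} ∈ {t : ℕ | v < e (t+1)} := by
    simp only [Set.mem_setOf_eq] at h2 ⊢
    omega
  have h4 : sInf {t : ℕ | v < e (t+1)} ≤ sInf {t : ℕ | v' < e (t+1)} := Nat.sInf_le h3
  simp only [segLetter]
  omega

private lemma hatStar_pi {n : ℕ} (π : Equiv.Perm (Fin n)) (i : Fin n) (h : (i : ℕ) ≠ n - 1)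
    (h1 : (i : ℕ) + 1 < n) :
    hatStar π (π i) = some (π ⟨(i : ℕ) + 1, h1⟩) := by
  simp only [hatStar, Equiv.symm_apply_apply]
  rw [dif_neg h]

private lemma hatStar_pi' {n : ℕ} (π : Equiv.Perm (Fin n)) (i j : Fin n)
    (hij : (i : ℕ) + 1 = (j : ℕ)) : hatStar π (π i) = some (π j) := by
  have h : (i : ℕ) ≠ n - 1 := by have := j.isLt; omega
  simp only [hatStar, Equiv.symm_apply_apply]
  rw [dif_neg h]
  congr 2
  exact Fin.ext hij

private lemma hatStar_fix {n : ℕ} (π : Equiv.Perm (Fin n)) (i j : Fin n)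
    (hij : (i : ℕ) + 1 = (j : ℕ)) (p q : Fin n) (hp : π i = p) (hq : π j = q) :
    hatStar π p = some q := by
  subst hp; subst hq
  exact hatStar_pi' π i j hij

private lemma hatStar_some {n : ℕ} (π : Equiv.Perm (Fin n)) (hn : 0 < n)
    (hl : π ⟨n-1, by omega⟩ = ⟨n-1, by omega⟩) (q : Fin n) (h : (q : ℕ) ≠ n-1) :
    ∃ w, hatStar π q = some w := by
  unfold hatStar
  rw [dif_neg]
  · exact ⟨_, rfl⟩
  · intro hc
    have h1 : π.symm q = ⟨n-1, by omega⟩ := Fin.ext hc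
    have h2 : q = π ⟨n-1, by omega⟩ := by rw [← h1, Equiv.apply_symm_apply]
    rw [hl] at h2
    exact h (by rw [h2])

private lemma hatStar_star {n : ℕ} (π : Equiv.Perm (Fin n)) (hn : 0 < n)
    (hl : π ⟨n-1, by omega⟩ = ⟨n-1, by omega⟩) (h1 : n - 1 < n) :
    hatStar π ⟨n-1, h1⟩ = none := by
  have h2 : π.symm ⟨n-1, h1⟩ = ⟨n-1, h1⟩ := by
    have h3 := congrArg π.symm hl
    rw [Equiv.symm_apply_apply] at h3
    exact h3.symm
  unfold hatStar
  rw [dif_pos (by rw [h2])]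

end AuxProof

theorem allowed_of_last_eq_n (k n : ℕ) (hk : 2 ≤ k) (hn : 1 ≤ n)
    (σ : Fin k → Bool) (π : Equiv.Perm (Fin n))
    (hlast : (π ⟨n - 1, by omega⟩ : ℕ) = n - 1)
    (hC : InCstar σ π) (hD : Dagger σ π) :
    π ∈ Allowed σ n := by
  classical
  obtain ⟨e, ⟨he0, hek, hemono, hA, hB, hCc, hDd, hEe⟩, -⟩ := hD
  have hk0 : 0 < k := by omega
  have hlastFin : π ⟨n-1, by omega⟩ = ⟨n-1, by omega⟩ := Fin.ext hlast
  obtain ⟨s, hsval, hsge⟩ : ∃ s : Word k,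
      (∀ m (_ : m < n - 1) (h2 : m < n), s m = segLetter hk0 e ((π ⟨m, h2⟩ : Fin n) : ℕ)) ∧
      (∀ m, n - 1 ≤ m → s m = wMax hk0 σ (m - (n-1))) := by
    refine ⟨fun m =>
      if h : m < n - 1 then segLetter hk0 e ((π ⟨m, by omega⟩ : Fin n) : ℕ)
      else wMax hk0 σ (m - (n-1)), fun m h h2 => ?_, fun m h => ?_⟩
    · dsimp only
      rw [dif_pos h]
    · dsimp only
      rw [dif_neg (by omega)]
  have hTshift : ∀ a : ℕ, (fun m => shiftW s a (m+1)) = shiftW s (a+1) := by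
    intro a; funext m
    simp only [shiftW]
    congr 1
    omega
  have hTlast : shiftW s (n-1) = wMax hk0 σ := by
    funext m
    simp only [shiftW]
    rw [hsge _ (by omega)]
    congr 1
    omega
  -- the word built from any shift with a < n-1 is never the maximal word
  have hM2 : ∀ a, a < n - 1 → shiftW s a ≠ wMax hk0 σ := by
    intro a ha heq
    have hn2 : 2 ≤ n := by omega
    have hv2 : n - 2 < n := by omega
    have hvne : (π ⟨n-2, hv2⟩ : ℕ) ≠ n - 1 := by
      intro hv
      have h1 : π ⟨n-2, hv2⟩ = π ⟨n-1, by omega⟩ := by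
        rw [hlastFin]; exact Fin.ext hv
      have h2 := π.injective h1
      have h3 : n - 2 = n - 1 := congrArg Fin.val h2
      omega
    have hvle : (π ⟨n-2, hv2⟩ : ℕ) ≤ n - 2 := by
      have := (π ⟨n-2, hv2⟩).isLt; omega
    by_cases h1 : σ ⟨k-1, by omega⟩ = true
    · -- σ_{k-1} = +
      have hwall : ∀ i, wMax hk0 σ i = ⟨k-1, by omega⟩ := by
        intro i; simp only [wMax, h1, if_true]
      have hval := congrFun heq (n-2-a)
      rw [show shiftW s a (n-2-a) = s (n-2) from by
            simp only [shiftW]; congr 1; omega,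
          hsval (n-2) (by omega) hv2, hwall] at hval
      have hvv : (segLetter hk0 e ((π ⟨n-2, hv2⟩ : Fin n) : ℕ) : ℕ) = k - 1 :=
        congrArg Fin.val hval
      obtain ⟨hsp1, hsp2⟩ := segLetter_spec hk0 e he0 hek (π ⟨n-2, hv2⟩).isLt
      rw [hvv] at hsp1
      -- claim π_{n-2} = n-2
      have hveq : (π ⟨n-2, hv2⟩ : ℕ) = n - 2 := by
        by_contra hne2
        have hvlt : (π ⟨n-2, hv2⟩ : ℕ) < n - 2 := by omega
        obtain ⟨w, hw⟩ := hatStar_some π (by omega) hlastFin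
          ⟨(π ⟨n-2, hv2⟩ : ℕ) + 1, by omega⟩ (show (π ⟨n-2, hv2⟩ : ℕ) + 1 ≠ n-1 by omega)
        have hp : hatStar π (π ⟨n-2, hv2⟩) = some (π ⟨n-1, by omega⟩) :=
          hatStar_pi' π _ _ (show n-2+1 = n-1 by omega)
        have happ := hA ⟨k-1, by omega⟩ (π ⟨n-2, hv2⟩) ⟨(π ⟨n-2, hv2⟩ : ℕ) + 1, by omega⟩
          hsp1
          (show ((π ⟨n-2, hv2⟩ : ℕ) + 1) < e (k-1+1) by
            rw [show k-1+1 = k from by omega, hek]; omega)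
          (show (π ⟨n-2, hv2⟩ : ℕ) < (π ⟨n-2, hv2⟩ : ℕ) + 1 by omega) _ w hp hw
        rw [if_pos h1] at happ
        have hx : (π ⟨n-1, by omega⟩ : Fin n) = ⟨n-1, by omega⟩ := hlastFin
        rw [hx] at happ
        have hcon : n - 1 < (w : ℕ) := Fin.lt_def.mp happ
        have := w.isLt
        omega
      have hfix : π ⟨n-2, hv2⟩ = ⟨n-2, hv2⟩ := Fin.ext hveq
      have hg1 : hatStar π ⟨n-2, hv2⟩ = some ⟨n-1, by omega⟩ :=
        hatStar_fix π ⟨n-2, hv2⟩ ⟨n-1, by omega⟩ (show n-2+1 = n-1 by omega) _ _ hfix hlastFin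
      have hg2 : hatStar π ⟨n-1, by omega⟩ = none :=
        hatStar_star π (by omega) hlastFin (by omega)
      have hres := hCc (by omega) hv2 (by omega) h1 hg1 hg2
      omega
    · have h1' : σ ⟨k-1, by omega⟩ = false := by
        rw [Bool.not_eq_true] at h1; exact h1
      by_cases h2 : σ ⟨0, hk0⟩ = true
      · -- σ_{k-1} = -, σ_0 = +
        obtain ⟨hwz, hwp⟩ := wMax_case2_eq hk0 σ h1' h2
        have hval := congrFun heq (n-1-a)
        have hs1 : shiftW s a (n-1-a) = s (n-1) := by
          simp only [shiftW]; congr 1; omega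
        have hs2 : s (n-1) = wMax hk0 σ (n-1-(n-1)) := hsge (n-1) le_rfl
        have hs3 : wMax hk0 σ (n-1-(n-1)) = wMax hk0 σ 0 :=
          congrArg (wMax hk0 σ) (by omega)
        have hfin : (⟨k-1, by omega⟩ : Fin k) = ⟨0, hk0⟩ :=
          (hwz.symm.trans ((hs3.symm.trans (hs2.symm.trans (hs1.symm.trans hval))).trans
            (hwp (n-1-a) (by omega))))
        have hcon : k - 1 = 0 := congrArg Fin.val hfin
        omega
      · have h2' : σ ⟨0, hk0⟩ = false := by
          rw [Bool.not_eq_true] at h2; exact h2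
        obtain ⟨hwe, hwo⟩ := wMax_alt_eq hk0 σ h1' h2'
        by_cases hro : (n-1-a) % 2 = 0
        · -- r even, r ≥ 2, so n ≥ 3
          have hr2 : 2 ≤ n-1-a := by omega
          have hn3 : 3 ≤ n := by omega
          have hv3 : n - 3 < n := by omega
          -- letter at n-2 is 0
          have hval1 := congrFun heq (n-1-a-1)
          have hs1 : shiftW s a (n-1-a-1) = s (n-2) := by
            simp only [shiftW]; congr 1; omega
          have hs2 : s (n-2) = segLetter hk0 e ((π ⟨n-2, hv2⟩ : Fin n) : ℕ) :=
            hsval (n-2) (by omega) hv2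
          have hlet1 : segLetter hk0 e ((π ⟨n-2, hv2⟩ : Fin n) : ℕ) = ⟨0, hk0⟩ :=
            (hs2.symm.trans (hs1.symm.trans hval1)).trans (hwo (n-1-a-1) (by omega))
          have hvv1 : (segLetter hk0 e ((π ⟨n-2, hv2⟩ : Fin n) : ℕ) : ℕ) = 0 :=
            congrArg Fin.val hlet1
          have hsp := (segLetter_spec hk0 e he0 hek (π ⟨n-2, hv2⟩).isLt).2
          rw [hvv1] at hsp
          -- letter at n-3 is k-1
          have hval2 := congrFun heq (n-1-a-2)
          have hs1' : shiftW s a (n-1-a-2) = s (n-3) := by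
            simp only [shiftW]; congr 1; omega
          have hs2' : s (n-3) = segLetter hk0 e ((π ⟨n-3, hv3⟩ : Fin n) : ℕ) :=
            hsval (n-3) (by omega) hv3
          have hlet2 : segLetter hk0 e ((π ⟨n-3, hv3⟩ : Fin n) : ℕ) = ⟨k-1, by omega⟩ :=
            (hs2'.symm.trans (hs1'.symm.trans hval2)).trans (hwe (n-1-a-2) (by omega))
          have hvv2 : (segLetter hk0 e ((π ⟨n-3, hv3⟩ : Fin n) : ℕ) : ℕ) = k - 1 :=
            congrArg Fin.val hlet2
          have hble' := (segLetter_spec hk0 e he0 hek (π ⟨n-3, hv3⟩).isLt).1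
          rw [hvv2] at hble'
          -- claim π_{n-2} = 0
          have hveq0 : (π ⟨n-2, hv2⟩ : ℕ) = 0 := by
            by_contra hne0
            obtain ⟨w, hw⟩ := hatStar_some π (by omega) hlastFin
              ⟨(π ⟨n-2, hv2⟩ : ℕ) - 1, by omega⟩
              (show (π ⟨n-2, hv2⟩ : ℕ) - 1 ≠ n-1 by omega)
            have hp : hatStar π (π ⟨n-2, hv2⟩) = some (π ⟨n-1, by omega⟩) :=
              hatStar_pi' π _ _ (show n-2+1 = n-1 by omega)
            have happ := hA ⟨0, hk0⟩ ⟨(π ⟨n-2, hv2⟩ : ℕ) - 1, by omega⟩ (π ⟨n-2, hv2⟩)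
              (show e 0 ≤ (π ⟨n-2, hv2⟩ : ℕ) - 1 by rw [he0]; omega)
              hsp (show (π ⟨n-2, hv2⟩ : ℕ) - 1 < (π ⟨n-2, hv2⟩ : ℕ) by omega) w _ hw hp
            rw [if_neg (by simp [h2'])] at happ
            have hx : (π ⟨n-1, by omega⟩ : Fin n) = ⟨n-1, by omega⟩ := hlastFin
            rw [hx] at happ
            have hcon : n - 1 < (w : ℕ) := Fin.lt_def.mp happ
            have := w.isLt
            omega
          -- π_{n-3} ≠ n-1
          have hv3ne : (π ⟨n-3, hv3⟩ : ℕ) ≠ n - 1 := by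
            intro hv
            have hx1 : π ⟨n-3, hv3⟩ = π ⟨n-1, by omega⟩ := by
              rw [hlastFin]; exact Fin.ext hv
            have hx2 := congrArg Fin.val (π.injective hx1)
            simp only at hx2
            omega
          have hv3le : (π ⟨n-3, hv3⟩ : ℕ) ≤ n - 2 := by
            have := (π ⟨n-3, hv3⟩).isLt; omega
          -- claim π_{n-3} = n-2
          have hveq' : (π ⟨n-3, hv3⟩ : ℕ) = n - 2 := by
            by_contra hne2
            obtain ⟨w, hw⟩ := hatStar_some π (by omega) hlastFin
              ⟨(π ⟨n-3, hv3⟩ : ℕ) + 1, by omega⟩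
              (show (π ⟨n-3, hv3⟩ : ℕ) + 1 ≠ n-1 by omega)
            have hp : hatStar π (π ⟨n-3, hv3⟩) = some (π ⟨n-2, hv2⟩) :=
              hatStar_pi' π _ _ (show n-3+1 = n-2 by omega)
            have happ := hA ⟨k-1, by omega⟩ (π ⟨n-3, hv3⟩) ⟨(π ⟨n-3, hv3⟩ : ℕ) + 1, by omega⟩
              hble'
              (show ((π ⟨n-3, hv3⟩ : ℕ) + 1) < e (k-1+1) by
                rw [show k-1+1 = k from by omega, hek]; omega)
              (show (π ⟨n-3, hv3⟩ : ℕ) < (π ⟨n-3, hv3⟩ : ℕ) + 1 by omega) _ w hp hw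
            rw [if_neg (by simp [h1'])] at happ
            have hcon : (w : ℕ) < (π ⟨n-2, hv2⟩ : ℕ) := Fin.lt_def.mp happ
            omega
          have hfix0 : π ⟨n-2, hv2⟩ = ⟨0, by omega⟩ := Fin.ext hveq0
          have hfix3 : π ⟨n-3, hv3⟩ = ⟨n-2, hv2⟩ := Fin.ext hveq'
          have hg1 : hatStar π ⟨0, by omega⟩ = some ⟨n-1, by omega⟩ :=
            hatStar_fix π ⟨n-2, hv2⟩ ⟨n-1, by omega⟩ (show n-2+1 = n-1 by omega) _ _ hfix0
              hlastFin
          have hg2 : hatStar π ⟨n-2, hv2⟩ = some ⟨0, by omega⟩ :=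
            hatStar_fix π ⟨n-3, hv3⟩ ⟨n-2, hv2⟩ (show n-3+1 = n-2 by omega) _ _ hfix3 hfix0
          have hg3 : hatStar π ⟨n-1, by omega⟩ = none :=
            hatStar_star π (by omega) hlastFin (by omega)
          have hres := hDd hk0 (by omega) (by omega) hv2 (by omega) h2' h1' hg1 hg2 hg3
          have hee : e (0+1) = e 1 := rfl
          have hb2 : ((⟨n-2, hv2⟩ : Fin n) : ℕ) = n - 2 := rfl
          rcases hres with hres | hres
          · omega
          · omega
        · -- r odd
          have hval := congrFun heq (n-1-a)
          have hs1 : shiftW s a (n-1-a) = s (n-1) := by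
            simp only [shiftW]; congr 1; omega
          have hs2 : s (n-1) = wMax hk0 σ (n-1-(n-1)) := hsge (n-1) le_rfl
          have hs3 : wMax hk0 σ (n-1-(n-1)) = wMax hk0 σ 0 :=
            congrArg (wMax hk0 σ) (by omega)
          have hfin : (⟨k-1, by omega⟩ : Fin k) = ⟨0, hk0⟩ :=
            ((hwe 0 rfl).symm.trans
              ((hs3.symm.trans (hs2.symm.trans (hs1.symm.trans hval))).trans
                (hwo (n-1-a) (by omega))))
          have hcon : k - 1 = 0 := congrArg Fin.val hfin
          omega
  -- base comparison: against the last shift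
  have hbase : ∀ a b (ha : a < n) (hb : b < n), (a = n-1 ∨ b = n-1) →
      ((π ⟨a, ha⟩ : ℕ) < (π ⟨b, hb⟩ : ℕ)) → sLt σ (shiftW s a) (shiftW s b) := by
    intro a b ha hb hor hab
    have hbn : b = n - 1 := by
      rcases hor with rfl | h
      · exfalso
        have h1 : (π ⟨n-1, ha⟩ : ℕ) = n - 1 := hlast
        have h2 := (π ⟨b, hb⟩).isLt
        omega
      · exact h
    subst hbn
    have han : a ≠ n - 1 := by
      intro h; subst h
      have h1 : (π ⟨n-1, ha⟩ : ℕ) = n - 1 := hlast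
      have h2 : (π ⟨n-1, hb⟩ : ℕ) = n - 1 := hlast
      omega
    rw [hTlast]
    exact wMax_greatest hk0 hk σ _ (hM2 a (by omega))
  -- main induction
  have key : ∀ m : ℕ, ∀ a b (ha : a < n) (hb : b < n), n - 1 - m ≤ max a b →
      ((π ⟨a, ha⟩ : ℕ) < (π ⟨b, hb⟩ : ℕ)) → sLt σ (shiftW s a) (shiftW s b) := by
    intro m
    induction m with
    | zero =>
        intro a b ha hb hmax hab
        exact hbase a b ha hb (by omega) hab
    | succ m ih =>
        intro a b ha hb hmax hab
        by_cases hend : a = n - 1 ∨ b = n - 1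
        · exact hbase a b ha hb hend hab
        · push_neg at hend
          have ha' : a < n - 1 := by omega
          have hb' : b < n - 1 := by omega
          have haa : a + 1 < n := by omega
          have hbb : b + 1 < n := by omega
          obtain ⟨hle1, hlt1⟩ := segLetter_spec hk0 e he0 hek (π ⟨a, ha⟩).isLt
          obtain ⟨hle2, hlt2⟩ := segLetter_spec hk0 e he0 hek (π ⟨b, hb⟩).isLt
          have hA0a : shiftW s a 0 = segLetter hk0 e ((π ⟨a, ha⟩ : Fin n) : ℕ) := by
            show s (0 + a) = _
            rw [Nat.zero_add, hsval a ha' ha]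
          have hA0b : shiftW s b 0 = segLetter hk0 e ((π ⟨b, hb⟩ : Fin n) : ℕ) := by
            show s (0 + b) = _
            rw [Nat.zero_add, hsval b hb' hb]
          rcases lt_trichotomy ((segLetter hk0 e ((π ⟨a, ha⟩ : Fin n) : ℕ) : ℕ))
              ((segLetter hk0 e ((π ⟨b, hb⟩ : Fin n) : ℕ) : ℕ)) with hlt | heq2 | hgt
          · refine ⟨0, fun i hi => absurd hi (Nat.not_lt_zero i), ?_, Or.inl ⟨?_, ?_⟩⟩
            · rw [hA0a, hA0b]
              exact ne_of_lt (Fin.lt_def.mpr hlt)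
            · simp [negCount]
            · rw [hA0a, hA0b]
              exact Fin.lt_def.mpr hlt
          · -- equal letters: recurse
            have hpa : hatStar π (π ⟨a, ha⟩) = some (π ⟨a+1, haa⟩) :=
              hatStar_pi' π _ _ rfl
            have hpb : hatStar π (π ⟨b, hb⟩) = some (π ⟨b+1, hbb⟩) :=
              hatStar_pi' π _ _ rfl
            have hlt2' := hlt2
            rw [← heq2] at hlt2'
            have happ := hA (segLetter hk0 e ((π ⟨a, ha⟩ : Fin n) : ℕ)) (π ⟨a, ha⟩)
              (π ⟨b, hb⟩) hle1 hlt2' hab _ _ hpa hpb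
            have h0eq : shiftW s a 0 = shiftW s b 0 := by
              rw [hA0a, hA0b]
              exact Fin.ext heq2
            cases hσt : σ (segLetter hk0 e ((π ⟨a, ha⟩ : Fin n) : ℕ)) with
            | true =>
                rw [if_pos hσt] at happ
                have hrec := ih (a+1) (b+1) haa hbb (by omega) (Fin.lt_def.mp happ)
                have hrec' : sLt σ (fun m => shiftW s a (m+1)) (fun m => shiftW s b (m+1)) := by
                  rw [hTshift a, hTshift b]; exact hrec
                exact sLt_cons_pos σ h0eq (by rw [hA0a]; exact hσt) hrec'
            | false =>
                rw [if_neg (by simp [hσt])] at happ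
                have hrec := ih (b+1) (a+1) hbb haa (by omega) (Fin.lt_def.mp happ)
                have hrec' : sLt σ (fun m => shiftW s b (m+1)) (fun m => shiftW s a (m+1)) := by
                  rw [hTshift a, hTshift b]; exact hrec
                exact sLt_cons_neg σ h0eq (by rw [hA0a]; exact hσt) hrec'
          · exfalso
            have := segLetter_mono hk0 e hek (π ⟨b, hb⟩).isLt (le_of_lt hab)
            omega
  refine ⟨s, fun i j => ⟨fun hij => ?_, fun hS => ?_⟩⟩
  · exact key (n-1) ↑i ↑j i.isLt j.isLt (by omega) (Fin.lt_def.mp hij)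
  · by_contra hij
    rcases lt_trichotomy (π i) (π j) with h | h | h
    · exact hij h
    · have hij2 : i = j := π.injective h
      subst hij2
      exact sLt_irrefl' σ _ hS
    · exact sLt_asymm' σ (key (n-1) ↑j ↑i j.isLt i.isLt (by omega) (Fin.lt_def.mp h)) hS
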